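/- Let A ⊆ [0,1] be a set containing at least one irrational number. Then for every natural number n ≥ 1 there exist a natural number d ≥ 1 and a configuration x ∈ S''_A such that for every (a,b) ∈ ℤ², there exist n^n points p_1, …, p_{n^n} ∈ ℤ² with the following properties: for each k, the n×n square {(p_k.1 + i, p_k.2 + j) : 0 ≤ i,j < n} is contained in the d×d square {(a + i, b + j) : 0 ≤ i,j < d}; these n×n squares are pairwise disjoint; and the n×n patterns of x at these positions are pairwise distinct, i.e., the functions (i,j) ↦ x(p_k.1 + i, p_k.2 + j) on {0,…,n−1}² are pairwise different for k = 1, …, n^n. -/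

import Mathlib

open Classical in
/-- The Sturmian word of slope `α` and intercept `ρ`: the letter at position `n` is
`0` (i.e. `false`) iff the fractional part of `ρ + n·α` lies in `[0, 1 - α)`. -/
noncomputable def sturmian (α ρ : ℝ) (n : ℤ) : Bool :=
  if Int.fract (ρ + n * α) < 1 - α then false else true

/-- The subshift `S''_A`: configurations `x : ℤ × ℤ → Bool` all of whose rows are
Sturmian words of a common slope `α ∈ A`, with possibly different intercepts. -/
def sturmianRows (A : Set ℝ) : Set (ℤ × ℤ → Bool) :=
  {x | ∃ α ∈ A, ∀ m : ℤ, ∃ ρ ∈ Set.Icc (0 : ℝ) 1, ∀ n : ℤ, x (m, n) = sturmian α ρ n}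

/-- The `m × m` square with lower-left corner `c` in `ℤ²`. -/
def square (c : ℤ × ℤ) (m : ℕ) : Set (ℤ × ℤ) :=
  {q | c.1 ≤ q.1 ∧ q.1 < c.1 + m ∧ c.2 ≤ q.2 ∧ q.2 < c.2 + m}


section SturmianAux

lemma fract_fract_add' (a t : ℝ) : Int.fract (Int.fract a + t) = Int.fract (a + t) := by
  have : Int.fract a + t = a + t - (⌊a⌋ : ℤ) := by rw [Int.fract]; ring
  rw [this, Int.fract_sub_intCast]

lemma fract_fract_add (a b : ℝ) : Int.fract (Int.fract a + Int.fract b) = Int.fract (a + b) := by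
  rw [fract_fract_add', add_comm, fract_fract_add', add_comm]

lemma fract_pos_irr {β : ℝ} (h : Irrational β) : 0 < Int.fract β := by
  rcases lt_or_eq_of_le (Int.fract_nonneg β) with h' | h'
  · exact h'
  · refine absurd ⟨⌊β⌋, ?_⟩ h
    have : β - (⌊β⌋:ℝ) = 0 := by rw [Int.self_sub_floor, ← h']
    push_cast; linarith

lemma exists_good_step (α : ℝ) (hirr : Irrational α) {δ : ℝ} (hδ : 0 < δ) :
    ∃ q p : ℤ, 0 < q ∧ (q:ℝ) * α - p ≠ 0 ∧ |(q:ℝ) * α - p| < δ := by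
  obtain ⟨M, hM⟩ := exists_nat_gt (1/δ)
  have hM0 : 0 < M + 1 := Nat.succ_pos M
  obtain ⟨j, k, hk0, hkM, hjk⟩ := Real.exists_int_int_abs_mul_sub_le α hM0
  refine ⟨k, j, hk0, ?_, ?_⟩
  · intro h
    have : (k:ℝ) * α = j := by linarith
    exact absurd this ((hirr.intCast_mul (by exact_mod_cast hk0.ne')).ne_int j)
  · refine lt_of_le_of_lt hjk ?_
    rw [div_lt_iff₀ (by positivity)]
    have h1 : (1:ℝ)/δ < M := hM
    have : (1:ℝ) < δ * M := by rw [← div_lt_iff₀' hδ]; exact hM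
    push_cast
    nlinarith [hδ]

lemma step_up (β δ : ℝ) (hβ : 0 < β) (hβδ : β ≤ δ) (hδ1 : δ ≤ 1) :
    ∀ K : ℕ, ∀ v : ℝ, 0 ≤ v → v < 1 → 1 ≤ v + K * β →
      ∃ j : ℕ, j ≤ K ∧ Int.fract (v + j * β) < δ := by
  intro K
  induction K with
  | zero => intro v h0 h1 hK; simp at hK; linarith
  | succ K ih =>
    intro v h0 h1 hK
    by_cases hvb : 1 ≤ v + β
    · refine ⟨1, by omega, ?_⟩
      have : Int.fract (v + (1:ℕ) * β) = v + β - 1 := by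
        rw [Int.fract_eq_iff]
        exact ⟨by linarith, by linarith, ⟨1, by push_cast; ring⟩⟩
      rw [this]; linarith
    · push_neg at hvb
      obtain ⟨j, hj, hfr⟩ := ih (v + β) (by linarith) (by linarith)
        (by push_cast at hK ⊢; linarith)
      refine ⟨j + 1, by omega, ?_⟩
      have : v + (↑(j+1):ℝ) * β = (v + β) + j * β := by push_cast; ring
      rw [this]; exact hfr

lemma step_down (γ δ : ℝ) (hγ : 0 < γ) (hγδ : γ < δ) (hδ1 : δ ≤ 1) :
    ∀ K : ℕ, ∀ v : ℝ, 0 ≤ v → v < 1 → v - K * γ < γ →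
      ∃ j : ℕ, j ≤ K ∧ Int.fract (v - j * γ) < δ := by
  intro K
  induction K with
  | zero =>
    intro v h0 h1 hK
    simp at hK
    exact ⟨0, le_refl _, by simpa [Int.fract_eq_self.mpr ⟨h0, h1⟩] using lt_trans hK hγδ⟩
  | succ K ih =>
    intro v h0 h1 hK
    by_cases hvd : v < δ
    · exact ⟨0, by omega, by simpa [Int.fract_eq_self.mpr ⟨h0, h1⟩] using hvd⟩
    · push_neg at hvd
      obtain ⟨j, hj, hfr⟩ := ih (v - γ) (by linarith) (by linarith)
        (by push_cast at hK ⊢; linarith)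
      refine ⟨j + 1, by omega, ?_⟩
      have : v - (↑(j+1):ℝ) * γ = (v - γ) - j * γ := by push_cast; ring
      rw [this]; exact hfr

lemma exists_col (α : ℝ) (hirr : Irrational α) {δ : ℝ} (hδ : 0 < δ) (hδ1 : δ ≤ 1) :
    ∃ R : ℕ, ∀ b : ℤ, ∃ c : ℤ, b ≤ c ∧ c ≤ b + R ∧ Int.fract ((c:ℝ) * α) < δ := by
  obtain ⟨q, p, hq, hβ0, hβδ⟩ := exists_good_step α hirr hδ
  set β : ℝ := (q:ℝ) * α - p with hβdef
  set K : ℕ := ⌈1/|β|⌉₊ with hK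
  have hεpos : 0 < |β| := abs_pos.mpr hβ0
  have hKε : 1 ≤ (K:ℝ) * |β| := by
    rw [← div_le_iff₀ hεpos]
    exact Nat.le_ceil _
  refine ⟨K * q.toNat, fun b => ?_⟩
  set v : ℝ := Int.fract ((b:ℝ) * α) with hv
  have hv0 : 0 ≤ v := Int.fract_nonneg _
  have hv1 : v < 1 := Int.fract_lt_one _
  have key : ∀ j : ℕ, Int.fract (((b + j * q : ℤ) : ℝ) * α) = Int.fract (v + j * β) := by
    intro j
    have h1 : ((b + j * q : ℤ) : ℝ) * α = ((b:ℝ) * α + j * β) + ((j * p : ℤ) : ℝ) := by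
      push_cast; ring
    rw [h1, Int.fract_add_intCast, hv, fract_fract_add']
  have hcle : ∀ j : ℕ, j ≤ K → b + (j:ℤ) * q ≤ b + (K * q.toNat : ℕ) := by
    intro j hj
    have : (j:ℤ) * q ≤ (K:ℤ) * q := by
      apply mul_le_mul_of_nonneg_right (by exact_mod_cast hj) hq.le
    push_cast [Int.toNat_of_nonneg hq.le]
    linarith
  have hcge : ∀ j : ℕ, b ≤ b + (j:ℤ) * q := fun j => le_add_of_nonneg_right (by positivity)
  rcases lt_or_gt_of_ne hβ0 with hneg | hpos
  · obtain ⟨j, hj, hfr⟩ := step_down (-β) δ (by linarith) (by rw [abs_of_neg hneg] at hβδ; linarith)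
      hδ1 K v hv0 hv1 (by rw [abs_of_neg hneg] at hKε; nlinarith)
    refine ⟨b + j * q, hcge j, hcle j hj, ?_⟩
    rw [key j]
    have : v + (j:ℝ) * β = v - (j:ℝ) * (-β) := by ring
    rw [this]; exact hfr
  · obtain ⟨j, hj, hfr⟩ := step_up β δ hpos (by rw [abs_of_pos hpos] at hβδ; linarith)
      hδ1 K v hv0 hv1 (by rw [abs_of_pos hpos] at hKε; nlinarith)
    exact ⟨b + j * q, hcge j, hcle j hj, by rw [key j]; exact hfr⟩

lemma exists_delta (α : ℝ) (hirr : Irrational α) (h0 : 0 < α) (h1 : α < 1) (n : ℕ) :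
    ∃ δ : ℝ, 0 < δ ∧ δ ≤ α ∧ δ ≤ 1 - α ∧
      ∀ m : ℤ, m.natAbs ≤ n → m ≠ 0 → m ≠ -1 →
        δ ≤ 1 - Int.fract ((m:ℝ) * α) ∧ δ ≤ |Int.fract ((m:ℝ) * α) - (1 - α)| := by
  classical
  set F : Finset ℤ := Finset.Icc (-(n:ℤ)) n with hF
  have hFne : F.Nonempty := ⟨0, by simp [hF]⟩
  set g : ℤ → ℝ := fun m =>
    if m = 0 ∨ m = -1 then min α (1 - α)
    else min (1 - Int.fract ((m:ℝ) * α)) |Int.fract ((m:ℝ) * α) - (1 - α)| with hg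
  refine ⟨min (min α (1 - α)) (F.inf' hFne g), ?_, ?_, ?_, ?_⟩
  · apply lt_min (lt_min h0 (by linarith))
    rw [Finset.lt_inf'_iff]
    intro m hm
    by_cases hc : m = 0 ∨ m = -1
    · simp only [hg, hc, if_true]; exact lt_min h0 (by linarith)
    · push_neg at hc
      simp only [hg, if_neg (not_or.mpr hc)]
      apply lt_min
      · linarith [Int.fract_lt_one ((m:ℝ) * α)]
      · rw [abs_pos, sub_ne_zero]
        intro heq
        have hmul : ((m:ℝ) + 1) * α = (⌊(m:ℝ) * α⌋ : ℝ) + 1 := by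
          have := Int.self_sub_floor ((m:ℝ) * α)
          rw [Int.fract] at heq
          nlinarith [heq]
        have : Irrational (((m + 1 : ℤ):ℝ) * α) := hirr.intCast_mul (by omega)
        refine this ⟨⌊(m:ℝ) * α⌋ + 1, ?_⟩
        push_cast
        linarith [hmul]
  · exact le_trans (min_le_left _ _) (min_le_left _ _)
  · exact le_trans (min_le_left _ _) (min_le_right _ _)
  · intro m hmn hm0 hm1
    have hmF : m ∈ F := by
      simp only [hF, Finset.mem_Icc]
      omega
    have hle : F.inf' hFne g ≤ g m := Finset.inf'_le _ hmF
    have hgm : g m = min (1 - Int.fract ((m:ℝ) * α)) |Int.fract ((m:ℝ) * α) - (1 - α)| := by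
      simp only [hg, if_neg (not_or.mpr ⟨hm0, hm1⟩)]
    rw [hgm] at hle
    constructor
    · exact le_trans (min_le_right _ _) (le_trans hle (min_le_left _ _))
    · exact le_trans (min_le_right _ _) (le_trans hle (min_le_right _ _))

lemma digits_inj (n : ℕ) (hn : 1 ≤ n) : ∀ w k l : ℕ, k < n ^ w → l < n ^ w →
    (∀ i, i < w → k / n ^ i % n = l / n ^ i % n) → k = l := by
  intro w
  induction w with
  | zero => intro k l hk hl _; simp at hk hl; omega
  | succ w ih =>
    intro k l hk hl hd
    have h0 : k % n = l % n := by simpa using hd 0 (by omega)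
    have hstep : ∀ i, i < w → (k / n) / n ^ i % n = (l / n) / n ^ i % n := by
      intro i hi
      have := hd (i + 1) (by omega)
      simp only [Nat.div_div_eq_div_mul, ← pow_succ']
      exact this
    have hkn : k / n < n ^ w := by
      rw [Nat.div_lt_iff_lt_mul (by omega)]
      calc k < n ^ (w + 1) := hk
      _ = n ^ w * n := pow_succ n w
    have hln : l / n < n ^ w := by
      rw [Nat.div_lt_iff_lt_mul (by omega)]
      calc l < n ^ (w + 1) := hl
      _ = n ^ w * n := pow_succ n w
    have hdiv : k / n = l / n := ih (k / n) (l / n) hkn hln hstep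
    rw [← Nat.div_add_mod k n, ← Nat.div_add_mod l n, hdiv, h0]

end SturmianAux

section SturmianWords

lemma sturmian_rho (α : ℝ) (t : ℕ) (y : ℤ) :
    sturmian α (Int.fract (-(t:ℝ) * α)) y =
      if Int.fract (((y - t : ℤ):ℝ) * α) < 1 - α then false else true := by
  rw [sturmian, fract_fract_add']
  congr 2
  push_cast
  ring

lemma fract_neg_alpha (α : ℝ) (h0 : 0 < α) (h1 : α < 1) : Int.fract (-α) = 1 - α := by
  rw [Int.fract_neg, Int.fract_eq_self.mpr ⟨h0.le, h1⟩]
  rw [Int.fract_eq_self.mpr ⟨h0.le, h1⟩]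
  exact h0.ne'

lemma letter_shift (α : ℝ) (h0 : 0 < α) (h1 : α < 1) {n : ℕ} {δ : ℝ}
    (hδα : δ ≤ α) (hδα' : δ ≤ 1 - α)
    (hδm : ∀ m : ℤ, m.natAbs ≤ n → m ≠ 0 → m ≠ -1 →
        δ ≤ 1 - Int.fract ((m:ℝ) * α) ∧ δ ≤ |Int.fract ((m:ℝ) * α) - (1 - α)|)
    (t : ℕ) (ht : t < n) (c : ℤ) (hc : Int.fract ((c:ℝ) * α) < δ)
    (j : ℕ) (hj : j < n) :
    sturmian α (Int.fract (-(t:ℝ) * α)) (c + j) = sturmian α (Int.fract (-(t:ℝ) * α)) j := by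
  rw [sturmian_rho, sturmian_rho]
  set m : ℤ := (j:ℤ) - t with hm
  have harg : (c + (j:ℤ) - t) = c + m := by omega
  rw [harg]
  set u : ℝ := Int.fract ((m:ℝ) * α) with hu
  set e : ℝ := Int.fract ((c:ℝ) * α) with he
  have he0 : 0 ≤ e := Int.fract_nonneg _
  have hsplit : Int.fract (u + e) = Int.fract (((c + m : ℤ):ℝ) * α) := by
    rw [hu, he, fract_fract_add]
    congr 1
    push_cast
    ring
  rw [← hsplit]
  have main : (Int.fract (u + e) < 1 - α ↔ u < 1 - α) := by
    by_cases hm0 : m = 0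
    · have hu0 : u = 0 := by simp [hu, hm0]
      rw [hu0, zero_add, Int.fract_eq_self.mpr ⟨he0, by linarith⟩]
      constructor <;> intro <;> linarith
    · by_cases hm1 : m = -1
      · have hu1 : u = 1 - α := by
          rw [hu, hm1]
          push_cast
          rw [neg_one_mul]
          exact fract_neg_alpha α h0 h1
        rw [hu1]
        have : Int.fract (1 - α + e) = 1 - α + e := by
          rw [Int.fract_eq_self]
          constructor <;> [linarith; linarith]
        rw [this]
        constructor <;> intro <;> linarith
      · have hmn : m.natAbs ≤ n := by omega
        obtain ⟨A, B⟩ := hδm m hmn hm0 hm1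
        have hfr : Int.fract (u + e) = u + e := by
          rw [Int.fract_eq_self]
          have hu0 : 0 ≤ u := Int.fract_nonneg _
          exact ⟨by linarith, by linarith⟩
        rw [hfr]
        constructor
        · intro h; linarith
        · intro h
          have : |u - (1 - α)| = 1 - α - u := by rw [abs_of_neg (by linarith)]; ring
          rw [this] at B
          linarith
  by_cases hcond : u < 1 - α
  · rw [if_pos hcond, if_pos (main.mpr hcond)]
  · rw [if_neg hcond, if_neg (fun hx => hcond (main.mp hx))]

lemma words_distinct (α : ℝ) (hirr : Irrational α) (h0 : 0 < α) (h1 : α < 1) {n : ℕ}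
    (t s : ℕ) (hts : t < s) (hs : s < n) :
    ∃ j : ℕ, j < n ∧
      sturmian α (Int.fract (-(t:ℝ) * α)) (j:ℤ) ≠ sturmian α (Int.fract (-(s:ℝ) * α)) (j:ℤ) := by
  have hword : ∀ (r : ℕ) (y : ℤ), sturmian α (Int.fract (-(r:ℝ) * α)) y =
      if Int.fract (((y - r : ℤ):ℝ) * α) < 1 - α then false else true := sturmian_rho α
  by_cases hm1 : s = t + 1
  · refine ⟨t, lt_trans hts hs, ?_⟩
    rw [hword, hword]
    have e1 : ((t:ℤ) - t) = 0 := by omega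
    have e2 : ((t:ℤ) - s) = -1 := by omega
    rw [e1, e2]
    have v1 : Int.fract (((0:ℤ):ℝ) * α) = 0 := by norm_num
    have v2 : Int.fract (((-1:ℤ):ℝ) * α) = 1 - α := by
      push_cast; rw [neg_one_mul]; exact fract_neg_alpha α h0 h1
    rw [v1, v2]
    simp only [if_pos (by linarith : (0:ℝ) < 1 - α), if_neg (lt_irrefl (1 - α))]
    exact Bool.false_ne_true
  · set m : ℤ := (s:ℤ) - t with hmdef
    have hm2 : 2 ≤ m := by omega
    have hfr_pos : 0 < Int.fract ((m:ℝ) * α) :=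
      fract_pos_irr (by exact_mod_cast hirr.intCast_mul (by omega : m ≠ 0))
    have hfr_lt : Int.fract ((m:ℝ) * α) < 1 := Int.fract_lt_one _
    by_contra hcon
    push_neg at hcon
    have h1' := hcon t (lt_trans hts hs)
    rw [hword, hword] at h1'
    have e1 : ((t:ℤ) - t) = 0 := by omega
    have e2 : ((t:ℤ) - s) = -m := by omega
    rw [e1, e2] at h1'
    have v1 : Int.fract (((0:ℤ):ℝ) * α) = 0 := by norm_num
    rw [v1, if_pos (by linarith : (0:ℝ) < 1 - α)] at h1'
    have hneg : Int.fract (((-m:ℤ):ℝ) * α) = 1 - Int.fract ((m:ℝ) * α) := by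
      push_cast
      rw [neg_mul, Int.fract_neg hfr_pos.ne']
    rw [hneg] at h1'
    have hgtα : α < Int.fract ((m:ℝ) * α) := by
      by_contra hle
      push_neg at hle
      rw [if_neg (by linarith : ¬(1 - Int.fract ((m:ℝ) * α) < 1 - α))] at h1'
      simp at h1'
    have h2' := hcon (s - 1) (by omega)
    rw [hword, hword] at h2'
    have e3 : (((s-1 : ℕ):ℤ) - t) = m - 1 := by omega
    have e4 : (((s-1 : ℕ):ℤ) - s) = -1 := by omega
    rw [e3, e4] at h2'
    have v2 : Int.fract (((-1:ℤ):ℝ) * α) = 1 - α := by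
      push_cast; rw [neg_one_mul]; exact fract_neg_alpha α h0 h1
    rw [v2, if_neg (lt_irrefl (1 - α))] at h2'
    have h5 : ¬ (Int.fract (((m - 1 : ℤ):ℝ) * α) < 1 - α) := by
      intro hx
      rw [if_pos hx] at h2'
      simp at h2'
    apply h5
    have harg : ((m - 1 : ℤ):ℝ) * α = (m:ℝ) * α + (-α) := by push_cast; ring
    rw [harg, ← fract_fract_add']
    have : Int.fract ((m:ℝ) * α) + (-α) = Int.fract ((m:ℝ) * α) - α := by ring
    rw [this, Int.fract_eq_self.mpr ⟨by linarith, by linarith⟩]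
    linarith

end SturmianWords

/-- If `A ⊆ [0,1]` contains an irrational number, then for every `n ≥ 1` there are
`d ≥ 1` and a configuration `x ∈ S''_A` such that every `d × d` pattern of `x`
contains at least `n^n` pairwise different, pairwise disjoint `n × n` patterns. -/
theorem exists_config_with_many_patterns (A : Set ℝ) (hA : A ⊆ Set.Icc (0 : ℝ) 1)
    (hirr : ∃ α ∈ A, Irrational α) :
    ∀ n : ℕ, 1 ≤ n → ∃ d : ℕ, 1 ≤ d ∧ ∃ x ∈ sturmianRows A,
      ∀ a b : ℤ, ∃ p : Fin (n ^ n) → ℤ × ℤ,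
        (∀ k, square (p k) n ⊆ square (a, b) d) ∧
        (∀ k l, k ≠ l → Disjoint (square (p k) n) (square (p l) n)) ∧
        (∀ k l, k ≠ l →
          (fun (i j : Fin n) => x ((p k).1 + (i : ℕ), (p k).2 + (j : ℕ))) ≠
          (fun (i j : Fin n) => x ((p l).1 + (i : ℕ), (p l).2 + (j : ℕ)))) := by
  obtain ⟨α, hαA, hirr⟩ := hirr
  obtain ⟨hα0', hα1'⟩ := hA hαA
  have hα0 : 0 < α := lt_of_le_of_ne hα0' (Ne.symm hirr.ne_zero)
  have hα1 : α < 1 := lt_of_le_of_ne hα1' hirr.ne_one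
  intro n hn
  obtain ⟨δ, hδ0, hδα, hδα', hδm⟩ := exists_delta α hirr hα0 hα1 n
  obtain ⟨R, hR⟩ := exists_col α hirr hδ0 (by linarith)
  set N : ℕ := n ^ n with hN
  have hN1 : 1 ≤ N := Nat.one_le_pow _ _ (by omega)
  set T : ℕ := n * N with hT
  have hT1 : 1 ≤ T := by rw [hT]; exact Nat.one_le_iff_ne_zero.mpr (by positivity)
  set d : ℕ := T + R + n with hd
  refine ⟨d, by omega, ?_⟩
  set dig : ℕ → ℕ → ℕ := fun k i => k / n ^ i % n with hdigdef
  set tOf : ℤ → ℕ :=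
    fun r => dig ((r % (T:ℤ)).toNat / n) ((r % (T:ℤ)).toNat % n) with htOfdef
  set x : ℤ × ℤ → Bool :=
    fun p => sturmian α (Int.fract (-(tOf p.1 : ℝ) * α)) p.2 with hxdef
  have hxval : ∀ (r' c' : ℤ), x (r', c') = sturmian α (Int.fract (-(tOf r' : ℝ) * α)) c' :=
    fun _ _ => rfl
  refine ⟨x, ⟨α, hαA, fun m => ⟨Int.fract (-(tOf m : ℝ) * α),
    ⟨Int.fract_nonneg _, (Int.fract_lt_one _).le⟩, fun _ => rfl⟩⟩, ?_⟩
  intro a b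
  obtain ⟨c, hbc, hcb, hcfr⟩ := hR b
  set r : Fin N → ℤ := fun k => a + (((k:ℕ):ℤ) * n - a) % (T:ℤ) with hrdef
  have hTZ : (0:ℤ) < (T:ℤ) := by exact_mod_cast hT1
  have hr0 : ∀ k : Fin N, a ≤ r k :=
    fun k => le_add_of_nonneg_right (Int.emod_nonneg _ hTZ.ne')
  have hr1 : ∀ k : Fin N, r k < a + T :=
    fun k => (add_lt_add_iff_left a).mpr (Int.emod_lt_of_pos _ hTZ)
  have hrdvd : ∀ k : Fin N, ∃ u : ℤ, r k = ((k:ℕ):ℤ) * n + (T:ℤ) * u := by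
    intro k
    refine ⟨-((((k:ℕ):ℤ) * n - a) / (T:ℤ)), ?_⟩
    simp only [hrdef]
    rw [Int.emod_def]
    ring
  have hdig_lt : ∀ k i : ℕ, dig k i < n := fun k i => Nat.mod_lt _ (by omega)
  have hrow : ∀ (k : Fin N) (i : ℕ), i < n → tOf (r k + (i:ℤ)) = dig (k:ℕ) i := by
    intro k i hi
    obtain ⟨u, hu⟩ := hrdvd k
    have hlt : (k:ℕ) * n + i < T := by
      have hkN : (k:ℕ) < N := k.isLt
      calc (k:ℕ) * n + i < ((k:ℕ) + 1) * n := by nlinarith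
      _ ≤ N * n := Nat.mul_le_mul_right _ (by omega)
      _ = T := by rw [hT, Nat.mul_comm]
    have hmod : (r k + (i:ℤ)) % (T:ℤ) = ((k:ℕ):ℤ) * n + i := by
      rw [hu]
      have e : ((k:ℕ):ℤ) * n + (T:ℤ) * u + i = (((k:ℕ):ℤ) * n + i) + (T:ℤ) * u := by ring
      rw [e, Int.add_mul_emod_self_left]
      apply Int.emod_eq_of_lt
      · positivity
      · exact_mod_cast hlt
    simp only [htOfdef]
    rw [hmod]
    have htn : ((((k:ℕ):ℤ) * n + i)).toNat = (k:ℕ) * n + i := by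
      rw [show (((k:ℕ):ℤ) * n + i) = (((k:ℕ) * n + i : ℕ) : ℤ) by push_cast; ring]
      exact Int.toNat_natCast _
    rw [htn]
    have e2 : (k:ℕ) * n + i = i + n * (k:ℕ) := by ring
    rw [e2, Nat.add_mul_div_left _ _ (by omega : 0 < n), Nat.add_mul_mod_self_left,
      Nat.div_eq_of_lt hi, Nat.mod_eq_of_lt hi, Nat.zero_add]
  refine ⟨fun k => (r k, c), ?_, ?_, ?_⟩
  · intro k q hq
    have l1 := hr0 k
    have l2 := hr1 k
    simp only [square, Set.mem_setOf_eq] at hq ⊢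
    omega
  · intro k l hkl
    rw [Set.disjoint_left]
    intro q hqk hql
    simp only [square, Set.mem_setOf_eq] at hqk hql
    obtain ⟨u, hu⟩ := hrdvd k
    obtain ⟨v, hv⟩ := hrdvd l
    have hTcast : (T:ℤ) = (n:ℤ) * (N:ℤ) := by rw [hT]; push_cast; ring
    have hndvd : (n:ℤ) ∣ (r k - r l) := by
      refine ⟨((k:ℕ):ℤ) - ((l:ℕ):ℤ) + (N:ℤ) * (u - v), ?_⟩
      rw [hu, hv, hTcast]
      ring
    have hrkl : r k = r l := by
      have h0 : r k - r l = 0 :=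
        Int.eq_zero_of_dvd_of_natAbs_lt_natAbs hndvd (by omega)
      omega
    have hNdvd : (N:ℤ) ∣ (((k:ℕ):ℤ) - ((l:ℕ):ℤ)) := by
      refine ⟨v - u, ?_⟩
      have heq : ((k:ℕ):ℤ) * n + (T:ℤ) * u = ((l:ℕ):ℤ) * n + (T:ℤ) * v := by
        rw [← hu, ← hv, hrkl]
      have hn0 : (n:ℤ) ≠ 0 := by exact_mod_cast (by omega : n ≠ 0)
      apply mul_left_cancel₀ hn0
      rw [hTcast] at heq
      ring_nf
      ring_nf at heq
      linarith [heq]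
    have hk0 : (((k:ℕ):ℤ) - ((l:ℕ):ℤ)) = 0 := by
      refine Int.eq_zero_of_dvd_of_natAbs_lt_natAbs hNdvd ?_
      have := k.isLt
      have := l.isLt
      omega
    exact hkl (Fin.ext (by omega))
  · intro k l hkl hfun
    have hkln : (k:ℕ) ≠ (l:ℕ) := fun h => hkl (Fin.ext h)
    have hdig : ∃ i, i < n ∧ dig (k:ℕ) i ≠ dig (l:ℕ) i := by
      by_contra hno
      push_neg at hno
      refine hkln (digits_inj n hn n (k:ℕ) (l:ℕ) (hN ▸ k.isLt) (hN ▸ l.isLt) ?_)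
      intro i hi
      by_cases hcase : dig (k:ℕ) i = dig (l:ℕ) i
      · exact hcase
      · exact absurd hcase (not_not.mpr (hno i hi))
    obtain ⟨i, hin, hdne⟩ := hdig
    have key : ∀ j : ℕ, j < n →
        sturmian α (Int.fract (-(dig (k:ℕ) i : ℝ) * α)) (j:ℤ) =
        sturmian α (Int.fract (-(dig (l:ℕ) i : ℝ) * α)) (j:ℤ) := by
      intro j hjn
      have happ : x (r k + ((i:ℕ):ℤ), c + ((j:ℕ):ℤ)) = x (r l + ((i:ℕ):ℤ), c + ((j:ℕ):ℤ)) := by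
        have := congrFun (congrFun hfun ⟨i, hin⟩) ⟨j, hjn⟩
        simpa using this
      rw [hxval, hxval, hrow k i hin, hrow l i hin] at happ
      rw [← letter_shift α hα0 hα1 hδα hδα' hδm _ (hdig_lt (k:ℕ) i) c hcfr j hjn,
        ← letter_shift α hα0 hα1 hδα hδα' hδm _ (hdig_lt (l:ℕ) i) c hcfr j hjn]
      exact happ
    rcases Nat.lt_or_ge (dig (k:ℕ) i) (dig (l:ℕ) i) with hlt | hge
    · obtain ⟨j, hjn, hne⟩ :=
        words_distinct α hirr hα0 hα1 (dig (k:ℕ) i) (dig (l:ℕ) i) hlt (hdig_lt (l:ℕ) i)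
      exact hne (key j hjn)
    · have hlt : dig (l:ℕ) i < dig (k:ℕ) i := lt_of_le_of_ne hge hdne.symm
      obtain ⟨j, hjn, hne⟩ :=
        words_distinct α hirr hα0 hα1 (dig (l:ℕ) i) (dig (k:ℕ) i) hlt (hdig_lt (k:ℕ) i)
      exact hne (key j hjn).symm
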